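/- Suppose P and Q are relatively rational and have equal volume (a_1⋯a_m = b_1⋯b_m). Then P and Q are Π-congruent: there exist a nonzero linear functional π on ℝ^m, finitely many pairwise disjoint half-open boxes P_1, …, P_N whose union is P, and vectors v_1, …, v_N ∈ ℝ^m with π(v_i) = 0 for all i, such that the translates P_1 + v_1, …, P_N + v_N are pairwise disjoint and their union is Q. -/

import Mathlib

open scoped BigOperators

/-- The half-open box `[u_1, w_1) × ⋯ × [u_m, w_m)` in `ℝ^m`. -/
def HBox {m : ℕ} (u w : Fin m → ℝ) : Set (Fin m → ℝ) :=
  {x | ∀ j, u j ≤ x j ∧ x j < w j}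

lemma HBox_image_add {m : ℕ} (u w v : Fin m → ℝ) :
    (fun x => x + v) '' HBox u w = HBox (u + v) (w + v) := by
  ext x
  constructor
  · rintro ⟨y, hy, rfl⟩ j
    have h1 := (hy j).1
    have h2 := (hy j).2
    constructor <;> simp only [Pi.add_apply] <;> linarith
  · intro hx
    refine ⟨x - v, fun j => ?_, by simp⟩
    have h1 := (hx j).1
    have h2 := (hx j).2
    simp only [Pi.add_apply] at h1 h2
    constructor <;> simp only [Pi.sub_apply] <;> linarith

lemma cell_disjoint {m : ℕ} (s : Fin m → ℝ) (hs : ∀ j, 0 < s j)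
    (c c' : Fin m → ℕ) (h : c ≠ c') :
    Disjoint (HBox (fun j => (c j : ℝ) * s j) (fun j => ((c j : ℝ) + 1) * s j))
      (HBox (fun j => (c' j : ℝ) * s j) (fun j => ((c' j : ℝ) + 1) * s j)) := by
  rw [Set.disjoint_left]
  intro x hx hx'
  obtain ⟨j, hj⟩ := Function.ne_iff.mp h
  have h1 := (hx j).1
  have h2 := (hx j).2
  have h1' := (hx' j).1
  have h2' := (hx' j).2
  have A : (c j : ℝ) < (c' j : ℝ) + 1 := by
    have := lt_of_le_of_lt h1 h2'
    exact lt_of_mul_lt_mul_right this (le_of_lt (hs j))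
  have B : (c' j : ℝ) < (c j : ℝ) + 1 := by
    have := lt_of_le_of_lt h1' h2
    exact lt_of_mul_lt_mul_right this (le_of_lt (hs j))
  have A' : c j < c' j + 1 := by exact_mod_cast A
  have B' : c' j < c j + 1 := by exact_mod_cast B
  omega

lemma cell_union {m N : ℕ} (s B : Fin m → ℝ) (hs : ∀ j, 0 < s j)
    (M : Fin m → ℕ) (hMB : ∀ j, (M j : ℝ) * s j = B j)
    (c : Fin N → Fin m → ℕ) (hlt : ∀ k j, c k j < M j)
    (hsurj : ∀ d : Fin m → ℕ, (∀ j, d j < M j) → ∃ k, c k = d) :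
    (⋃ k, HBox (fun j => (c k j : ℝ) * s j) (fun j => ((c k j : ℝ) + 1) * s j))
      = HBox 0 B := by
  ext x
  simp only [Set.mem_iUnion]
  constructor
  · rintro ⟨k, hk⟩ j
    have h1 := (hk j).1
    have h2 := (hk j).2
    have hc1 : (c k j : ℝ) + 1 ≤ (M j : ℝ) := by exact_mod_cast hlt k j
    constructor
    · have h0 : (0:ℝ) ≤ (c k j : ℝ) * s j :=
        mul_nonneg (Nat.cast_nonneg _) (le_of_lt (hs j))
      simpa using le_trans h0 h1
    · calc x j < ((c k j : ℝ) + 1) * s j := h2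
        _ ≤ (M j : ℝ) * s j := by
            have := le_of_lt (hs j)
            nlinarith
        _ = B j := hMB j
  · intro hx
    have hx0 : ∀ j, 0 ≤ x j := fun j => by simpa using (hx j).1
    have hxB : ∀ j, x j < B j := fun j => (hx j).2
    set d : Fin m → ℕ := fun j => (⌊x j / s j⌋).toNat with hd
    have hq0 : ∀ j, 0 ≤ ⌊x j / s j⌋ := fun j =>
      Int.floor_nonneg.mpr (div_nonneg (hx0 j) (le_of_lt (hs j)))
    have hdlt : ∀ j, d j < M j := by
      intro j
      have hq : x j / s j < (M j : ℝ) := by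
        rw [div_lt_iff₀ (hs j)]
        calc x j < B j := hxB j
          _ = (M j : ℝ) * s j := (hMB j).symm
      have hflt : ⌊x j / s j⌋ < (M j : ℤ) := Int.floor_lt.mpr (by exact_mod_cast hq)
      have h0 := hq0 j
      simp only [hd]
      omega
    have hdv : ∀ j, ((d j : ℝ)) = ((⌊x j / s j⌋ : ℤ) : ℝ) := by
      intro j
      exact_mod_cast congrArg (fun t : ℤ => (t : ℝ)) (Int.toNat_of_nonneg (hq0 j))
    obtain ⟨k, hk⟩ := hsurj d hdlt
    refine ⟨k, fun j => ?_⟩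
    rw [hk]
    constructor
    · show ((d j : ℝ)) * s j ≤ x j
      rw [hdv j]
      have hfl := Int.floor_le (x j / s j)
      calc ((⌊x j / s j⌋ : ℤ) : ℝ) * s j ≤ (x j / s j) * s j :=
            mul_le_mul_of_nonneg_right hfl (le_of_lt (hs j))
        _ = x j := div_mul_cancel₀ (x j) (ne_of_gt (hs j))
    · show x j < ((d j : ℝ) + 1) * s j
      rw [hdv j]
      have hfl := Int.lt_floor_add_one (x j / s j)
      calc x j = (x j / s j) * s j := (div_mul_cancel₀ (x j) (ne_of_gt (hs j))).symm
        _ < ((⌊x j / s j⌋ : ℤ) + 1 : ℝ) * s j := mul_lt_mul_of_pos_right hfl (hs j)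
        _ = (((⌊x j / s j⌋ : ℤ) : ℝ) + 1) * s j := by norm_num

/-- two relatively rational half-open boxes
`P = [0,a_1)×⋯×[0,a_m)` and `Q = [0,b_1)×⋯×[0,b_m)` of equal volume are
`Π`-congruent: for some nonzero linear functional `π`, `P` can be cut into
finitely many pairwise disjoint half-open boxes which, translated by
vectors in `ker π`, are pairwise disjoint with union `Q`. -/
theorem boxes_Pi_congruent (m : ℕ) (hm : 1 ≤ m) (a b : Fin m → ℝ)
    (ha : ∀ j, 0 < a j) (hb : ∀ j, 0 < b j)
    (hrat : ∃ lam : ℝ, lam ≠ 0 ∧ (∀ j, ∃ z : ℤ, lam * a j = (z : ℝ)) ∧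
      (∀ j, ∃ z : ℤ, lam * b j = (z : ℝ)))
    (hvol : ∏ j, a j = ∏ j, b j) :
    ∃ pi : (Fin m → ℝ) →ₗ[ℝ] ℝ, pi ≠ 0 ∧
    ∃ (N : ℕ) (u w v : Fin N → Fin m → ℝ),
      (∀ k k' : Fin N, k ≠ k' →
        Disjoint (HBox (u k) (w k)) (HBox (u k') (w k'))) ∧
      (⋃ k, HBox (u k) (w k)) = HBox 0 a ∧
      (∀ k, pi (v k) = 0) ∧
      (∀ k k' : Fin N, k ≠ k' →
        Disjoint ((fun x => x + v k) '' HBox (u k) (w k))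
          ((fun x => x + v k') '' HBox (u k') (w k'))) ∧
      (⋃ k, (fun x => x + v k) '' HBox (u k) (w k)) = HBox 0 b := by
  obtain ⟨m', rfl⟩ : ∃ m', m = m' + 1 := ⟨m - 1, by omega⟩
  obtain ⟨lam, hlam, hza, hzb⟩ := hrat
  choose z hz using hza
  choose y hy using hzb
  set μ := |lam| with hμdef
  have hμ : 0 < μ := abs_pos.mpr hlam
  set Z : Fin (m' + 1) → ℕ := fun j => (z j).natAbs with hZdef
  set Y : Fin (m' + 1) → ℕ := fun j => (y j).natAbs with hYdef
  have hZa : ∀ j, ((Z j : ℕ) : ℝ) = μ * a j := by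
    intro j
    have h1 : |lam * a j| = |(z j : ℝ)| := by rw [hz j]
    rw [abs_mul, abs_of_pos (ha j)] at h1
    have h2 : ((Z j : ℕ) : ℝ) = |(z j : ℝ)| := by
      simp [hZdef, Nat.cast_natAbs]
    rw [h2, ← h1]
  have hYb : ∀ j, ((Y j : ℕ) : ℝ) = μ * b j := by
    intro j
    have h1 : |lam * b j| = |(y j : ℝ)| := by rw [hy j]
    rw [abs_mul, abs_of_pos (hb j)] at h1
    have h2 : ((Y j : ℕ) : ℝ) = |(y j : ℝ)| := by
      simp [hYdef, Nat.cast_natAbs]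
    rw [h2, ← h1]
  have hZpos : ∀ j, 0 < Z j := by
    intro j
    have : (0:ℝ) < ((Z j : ℕ) : ℝ) := by rw [hZa j]; exact mul_pos hμ (ha j)
    exact_mod_cast this
  have hYpos : ∀ j, 0 < Y j := by
    intro j
    have : (0:ℝ) < ((Y j : ℕ) : ℝ) := by rw [hYb j]; exact mul_pos hμ (hb j)
    exact_mod_cast this
  -- product of Z equals product of Y
  have hprodZY : ∏ j, Z j = ∏ j, Y j := by
    have hc : ((∏ j, Z j : ℕ) : ℝ) = ((∏ j, Y j : ℕ) : ℝ) := by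
      push_cast
      calc (∏ j, ((Z j : ℕ) : ℝ)) = ∏ j, μ * a j :=
            Finset.prod_congr rfl fun j _ => hZa j
        _ = (∏ _j : Fin (m' + 1), μ) * ∏ j, a j := by rw [Finset.prod_mul_distrib]
        _ = (∏ _j : Fin (m' + 1), μ) * ∏ j, b j := by rw [hvol]
        _ = ∏ j, μ * b j := by rw [Finset.prod_mul_distrib]
        _ = ∏ j, ((Y j : ℕ) : ℝ) :=
            (Finset.prod_congr rfl fun j _ => (hYb j)).symm
    exact_mod_cast hc
  -- the grid counts
  set n : Fin (m' + 1) → ℕ := fun j => ∏ i, (if i ≤ j then Z i else Y i) with hndef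
  have hnpos : ∀ j, 0 < n j := by
    intro j
    apply Finset.prod_pos
    intro i _
    by_cases h : i ≤ j <;> simp [h, hZpos i, hYpos i]
  -- the key combinatorial identity
  have key : ∀ j, Z j * n (j - 1) = Y j * n j := by
    intro j
    by_cases hj : j = 0
    · subst hj
      have hsub : ∀ i : Fin (m' + 1), i ≤ (0 : Fin (m' + 1)) - 1 := by
        intro i
        have hi := i.isLt
        rw [Fin.le_def, Fin.coe_sub_one, if_pos rfl]
        omega
      have h1 : n ((0 : Fin (m' + 1)) - 1) = ∏ i, Z i := by
        simp only [hndef]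
        exact Finset.prod_congr rfl fun i _ => if_pos (hsub i)
      have h2 : n 0 = Z 0 * ∏ i ∈ Finset.univ.erase 0, Y i := by
        have hfe : ∀ i ∈ Finset.univ.erase (0 : Fin (m' + 1)),
            (if i ≤ (0 : Fin (m' + 1)) then Z i else Y i) = Y i := fun i hi =>
          if_neg (fun hle => (Finset.mem_erase.mp hi).1 (Fin.le_zero_iff.mp hle))
        calc n 0 = ∏ i, (if i ≤ (0 : Fin (m' + 1)) then Z i else Y i) := by rw [hndef]
          _ = (if (0 : Fin (m' + 1)) ≤ 0 then Z 0 else Y 0) *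
              ∏ i ∈ Finset.univ.erase 0, (if i ≤ (0 : Fin (m' + 1)) then Z i else Y i) :=
            (Finset.mul_prod_erase _ _ (Finset.mem_univ _)).symm
          _ = Z 0 * ∏ i ∈ Finset.univ.erase 0, Y i := by
            rw [if_pos le_rfl, Finset.prod_congr rfl hfe]
      have h3 : ∏ i, Y i = Y 0 * ∏ i ∈ Finset.univ.erase 0, Y i :=
        (Finset.mul_prod_erase Finset.univ _ (Finset.mem_univ (0 : Fin (m' + 1)))).symm
      rw [h1, h2, hprodZY, h3]
      ring
    · have hval : ((j - 1 : Fin (m' + 1)) : ℕ) = (j : ℕ) - 1 := by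
        rw [Fin.coe_sub_one, if_neg hj]
      have hjpos : 0 < (j : ℕ) := by
        rcases Nat.eq_zero_or_pos (j : ℕ) with h | h
        · exact absurd (Fin.ext h) hj
        · exact h
      have hE : ∀ i : Fin (m' + 1), i ≠ j →
          (if i ≤ j - 1 then Z i else Y i) = (if i ≤ j then Z i else Y i) := by
        intro i hij
        have hneq : (i : ℕ) ≠ (j : ℕ) := fun h => hij (Fin.ext h)
        by_cases h : i ≤ j - 1
        · rw [if_pos h, if_pos]
          rw [Fin.le_def, hval] at h
          rw [Fin.le_def]
          omega
        · rw [if_neg h, if_neg]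
          rw [Fin.le_def, hval] at h
          rw [Fin.le_def]
          omega
      have hjj : ¬ (j ≤ j - 1) := by
        rw [Fin.le_def, hval]
        omega
      have h1 : n (j - 1) = Y j * ∏ i ∈ Finset.univ.erase j,
          (if i ≤ j - 1 then Z i else Y i) := by
        calc n (j - 1) = ∏ i, (if i ≤ j - 1 then Z i else Y i) := by rw [hndef]
          _ = (if j ≤ j - 1 then Z j else Y j) *
              ∏ i ∈ Finset.univ.erase j, (if i ≤ j - 1 then Z i else Y i) :=
            (Finset.mul_prod_erase _ _ (Finset.mem_univ _)).symm
          _ = Y j * ∏ i ∈ Finset.univ.erase j, (if i ≤ j - 1 then Z i else Y i) := by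
            rw [if_neg hjj]
      have h2 : n j = Z j * ∏ i ∈ Finset.univ.erase j,
          (if i ≤ j then Z i else Y i) := by
        calc n j = ∏ i, (if i ≤ j then Z i else Y i) := by rw [hndef]
          _ = (if j ≤ j then Z j else Y j) *
              ∏ i ∈ Finset.univ.erase j, (if i ≤ j then Z i else Y i) :=
            (Finset.mul_prod_erase _ _ (Finset.mem_univ _)).symm
          _ = Z j * ∏ i ∈ Finset.univ.erase j, (if i ≤ j then Z i else Y i) := by
            rw [if_pos le_rfl]
      have h4 : ∏ i ∈ Finset.univ.erase j, (if i ≤ j - 1 then Z i else Y i)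
          = ∏ i ∈ Finset.univ.erase j, (if i ≤ j then Z i else Y i) :=
        Finset.prod_congr rfl fun i hi => hE i (Finset.mem_erase.mp hi).1
      rw [h1, h2, h4]
      ring
  -- the cell sizes
  set s : Fin (m' + 1) → ℝ := fun j => a j / n j with hsdef
  have hnpos' : ∀ j, (0:ℝ) < ((n j : ℕ) : ℝ) := fun j => by exact_mod_cast hnpos j
  have hspos : ∀ j, 0 < s j := fun j => div_pos (ha j) (hnpos' j)
  have hns : ∀ j, ((n j : ℕ) : ℝ) * s j = a j := by
    intro j
    have h := ne_of_gt (hnpos' j)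
    rw [hsdef]
    field_simp
  have hbs : ∀ j, ((n (j - 1) : ℕ) : ℝ) * s j = b j := by
    intro j
    have hc : ((Z j : ℕ) : ℝ) * ((n (j-1) : ℕ) : ℝ)
        = ((Y j : ℕ) : ℝ) * ((n j : ℕ) : ℝ) := by
      exact_mod_cast congrArg (fun t : ℕ => (t : ℝ)) (key j)
    rw [hZa j, hYb j] at hc
    have hab : a j * ((n (j-1) : ℕ) : ℝ) = b j * ((n j : ℕ) : ℝ) := by
      apply mul_left_cancel₀ (ne_of_gt hμ)
      calc μ * (a j * ((n (j-1) : ℕ) : ℝ)) = μ * a j * ((n (j-1) : ℕ) : ℝ) := by ring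
        _ = μ * b j * ((n j : ℕ) : ℝ) := hc
        _ = μ * (b j * ((n j : ℕ) : ℝ)) := by ring
    rw [hsdef]
    show ((n (j-1) : ℕ) : ℝ) * (a j / ((n j : ℕ) : ℝ)) = b j
    rw [mul_div_assoc', eq_comm, eq_div_iff (ne_of_gt (hnpos' j))]
    linear_combination -hab
  -- the index set
  set N : ℕ := Fintype.card (∀ j : Fin (m' + 1), Fin (n j)) with hNdef
  set e : Fin N ≃ (∀ j : Fin (m' + 1), Fin (n j)) := (Fintype.equivFin _).symm with hedef
  -- the linear functional
  set π : (Fin (m' + 1) → ℝ) →ₗ[ℝ] ℝ := ∑ j, (s j)⁻¹ • LinearMap.proj j with hπdef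
  have hπapp : ∀ x : Fin (m' + 1) → ℝ, π x = ∑ j, (s j)⁻¹ * x j := by
    intro x
    simp [hπdef, LinearMap.sum_apply, LinearMap.smul_apply, LinearMap.proj_apply,
      smul_eq_mul]
  have hπne : π ≠ 0 := by
    intro h
    have h0 : π a = 0 := by rw [h]; simp
    rw [hπapp] at h0
    have hpos : 0 < ∑ j, (s j)⁻¹ * a j := by
      apply Finset.sum_pos
      · intro j _
        exact mul_pos (inv_pos.mpr (hspos j)) (ha j)
      · exact Finset.univ_nonempty
    linarith
  refine ⟨π, hπne, N,
    (fun k j => (((e k j : ℕ) : ℝ)) * s j),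
    (fun k j => (((e k j : ℕ) : ℝ) + 1) * s j),
    (fun k j => ((((e k (j - 1) : ℕ)) : ℝ) - ((e k j : ℕ) : ℝ)) * s j),
    ?_, ?_, ?_, ?_, ?_⟩
  · -- disjointness of the P-cells
    intro k k' hkk'
    apply cell_disjoint s hspos (fun j => (e k j : ℕ)) (fun j => (e k' j : ℕ))
    intro hfun
    apply hkk'
    apply e.injective
    funext j
    exact Fin.ext (congrFun hfun j)
  · -- union of the P-cells
    apply cell_union s a hspos n hns (fun k j => (e k j : ℕ))
      (fun k j => (e k j).isLt)
    intro d hd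
    refine ⟨e.symm (fun j => ⟨d j, hd j⟩), ?_⟩
    funext j
    simp
  · -- translations are in the kernel
    intro k
    rw [hπapp]
    have hterm : ∀ j, (s j)⁻¹ * (((((e k (j - 1) : ℕ)) : ℝ) - ((e k j : ℕ) : ℝ)) * s j)
        = (((e k (j - 1) : ℕ)) : ℝ) - ((e k j : ℕ) : ℝ) := by
      intro j
      have hsne : s j ≠ 0 := ne_of_gt (hspos j)
      field_simp
    rw [Finset.sum_congr rfl fun j _ => hterm j]
    rw [Finset.sum_sub_distrib]
    have hre : (∑ j, (((e k (j - 1) : ℕ)) : ℝ)) = ∑ j, ((e k j : ℕ) : ℝ) :=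
      Fintype.sum_equiv (Equiv.subRight (1 : Fin (m' + 1))) _ _ (fun j => rfl)
    rw [hre]
    ring
  · -- disjointness of the translated cells
    intro k k' hkk'
    have himg : ∀ kk : Fin N, (fun x => x + (fun j => ((((e kk (j - 1) : ℕ)) : ℝ)
        - ((e kk j : ℕ) : ℝ)) * s j)) '' HBox (fun j => (((e kk j : ℕ) : ℝ)) * s j)
          (fun j => (((e kk j : ℕ) : ℝ) + 1) * s j)
        = HBox (fun j => (((e kk (j - 1) : ℕ) : ℝ)) * s j)
          (fun j => (((e kk (j - 1) : ℕ) : ℝ) + 1) * s j) := by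
      intro kk
      have hfu : ((fun j => ((e kk j : ℕ) : ℝ) * s j) +
          (fun j => ((((e kk (j - 1) : ℕ) : ℝ)) - ((e kk j : ℕ) : ℝ)) * s j))
          = (fun j : Fin (m' + 1) => (((e kk (j - 1) : ℕ) : ℝ)) * s j) := by
        funext j
        simp only [Pi.add_apply]
        ring
      have hfw : ((fun j => (((e kk j : ℕ) : ℝ) + 1) * s j) +
          (fun j => ((((e kk (j - 1) : ℕ) : ℝ)) - ((e kk j : ℕ) : ℝ)) * s j))
          = (fun j : Fin (m' + 1) => ((((e kk (j - 1) : ℕ) : ℝ)) + 1) * s j) := by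
        funext j
        simp only [Pi.add_apply]
        ring
      rw [HBox_image_add, hfu, hfw]
    rw [himg k, himg k']
    apply cell_disjoint s hspos (fun j => (e k (j - 1) : ℕ)) (fun j => (e k' (j - 1) : ℕ))
    intro hfun
    apply hkk'
    apply e.injective
    funext j'
    have hcf := congrFun hfun (j' + 1)
    rw [add_sub_cancel_right] at hcf
    exact Fin.ext hcf
  · -- union of the translated cells
    have himg : ∀ kk : Fin N, (fun x => x + (fun j => ((((e kk (j - 1) : ℕ)) : ℝ)
        - ((e kk j : ℕ) : ℝ)) * s j)) '' HBox (fun j => (((e kk j : ℕ) : ℝ)) * s j)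
          (fun j => (((e kk j : ℕ) : ℝ) + 1) * s j)
        = HBox (fun j => (((e kk (j - 1) : ℕ) : ℝ)) * s j)
          (fun j => (((e kk (j - 1) : ℕ) : ℝ) + 1) * s j) := by
      intro kk
      have hfu : ((fun j => ((e kk j : ℕ) : ℝ) * s j) +
          (fun j => ((((e kk (j - 1) : ℕ) : ℝ)) - ((e kk j : ℕ) : ℝ)) * s j))
          = (fun j : Fin (m' + 1) => (((e kk (j - 1) : ℕ) : ℝ)) * s j) := by
        funext j
        simp only [Pi.add_apply]
        ring
      have hfw : ((fun j => (((e kk j : ℕ) : ℝ) + 1) * s j) +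
          (fun j => ((((e kk (j - 1) : ℕ) : ℝ)) - ((e kk j : ℕ) : ℝ)) * s j))
          = (fun j : Fin (m' + 1) => ((((e kk (j - 1) : ℕ) : ℝ)) + 1) * s j) := by
        funext j
        simp only [Pi.add_apply]
        ring
      rw [HBox_image_add, hfu, hfw]
    rw [Set.iUnion_congr himg]
    apply cell_union s b hspos (fun j => n (j - 1)) hbs
      (fun k j => (e k (j - 1) : ℕ)) (fun k j => (e k (j - 1)).isLt)
    intro d hd
    refine ⟨e.symm (fun j => ⟨d (j + 1), by
      have hdj := hd (j + 1); rwa [add_sub_cancel_right] at hdj⟩), ?_⟩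
    funext j
    simp only [Equiv.apply_symm_apply]
    show d (j - 1 + 1) = d j
    rw [sub_add_cancel]
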